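/- Let S be a Cu-semigroup satisfying O5 and O6, let J ⊆ S be an ideal, and let x ∈ S. Then for every functional λ ∈ F(S), (x̂ ∧ h_J)(λ) = sup { λ(z) : z ∈ J, z ≤ x }, where h_J(μ) = 0 if μ ≤ λ_J and ∞ otherwise, and the infimum defining ∧ is the Riesz–Kantorovich formula on F(S). -/

import Mathlib

open scoped ENNReal

namespace CuFormal

variable {S : Type*} [AddCommMonoid S] [PartialOrder S]

/-- The algebra-free way-below relation: `x ≪ y` iff whenever `y ≤ sup yₙ` for an
increasing sequence with supremum, then `x ≤ yₙ` for some `n`. -/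
def WayBelow (x y : S) : Prop :=
  ∀ f : ℕ → S, Monotone f → ∀ s : S, IsLUB (Set.range f) s → y ≤ s → ∃ n, x ≤ f n

/-- Positively ordered monoid with addition monotone. -/
def PosOrdered : Prop :=
  (∀ x : S, (0 : S) ≤ x) ∧ ∀ a b c : S, b ≤ c → a + b ≤ a + c

/-- O1: every increasing sequence has a supremum. -/
def AxO1 : Prop := ∀ f : ℕ → S, Monotone f → ∃ s : S, IsLUB (Set.range f) s

/-- O2: every element is the supremum of a ≪-increasing sequence. -/
def AxO2 : Prop := ∀ x : S, ∃ f : ℕ → S, Monotone f ∧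
  (∀ n, WayBelow (f n) (f (n + 1))) ∧ IsLUB (Set.range f) x

/-- O3 -/
def AxO3 : Prop := ∀ x₁ y₁ x₂ y₂ : S,
  WayBelow x₁ y₁ → WayBelow x₂ y₂ → WayBelow (x₁ + x₂) (y₁ + y₂)

/-- O4 -/
def AxO4 : Prop := ∀ f g : ℕ → S, Monotone f → Monotone g →
  ∀ a b : S, IsLUB (Set.range f) a → IsLUB (Set.range g) b →
    IsLUB (Set.range fun n => f n + g n) (a + b)

/-- A Cu-semigroup: positively ordered monoid satisfying O1–O4. -/
def CuSemigroup : Prop :=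
  PosOrdered (S := S) ∧ AxO1 (S := S) ∧ AxO2 (S := S) ∧ AxO3 (S := S) ∧ AxO4 (S := S)

/-- O5 -/
def AxO5 : Prop := ∀ x' x y w' w : S, WayBelow x' x → x ≤ y → WayBelow w' w →
  x + w ≤ y → ∃ z : S, x' + z ≤ y ∧ y ≤ x + z ∧ WayBelow w' z

/-- O6 -/
def AxO6 : Prop := ∀ x' x y z : S, WayBelow x' x → x ≤ y + z →
  ∃ y' z' : S, x' ≤ y' + z' ∧ y' ≤ x ∧ y' ≤ y ∧ z' ≤ x ∧ z' ≤ z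

/-- O7 -/
def AxO7 : Prop := ∀ x₁' x₁ x₂' x₂ w : S,
  WayBelow x₁' x₁ → x₁ ≤ w → WayBelow x₂' x₂ → x₂ ≤ w →
  ∃ x : S, WayBelow x₁' x ∧ WayBelow x₂' x ∧ x ≤ w ∧ x ≤ x₁ + x₂

/-- An ideal: a downward hereditary subsemigroup closed under suprema of increasing
sequences. -/
def IsIdeal (J : Set S) : Prop :=
  (0 : S) ∈ J ∧ (∀ x y : S, x ∈ J → y ∈ J → x + y ∈ J) ∧
  (∀ x y : S, y ∈ J → x ≤ y → x ∈ J) ∧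
  (∀ f : ℕ → S, Monotone f → (∀ n, f n ∈ J) →
    ∀ s : S, IsLUB (Set.range f) s → s ∈ J)

/-- Countably based. -/
def CountablyBased : Prop := ∃ B : Set S, B.Countable ∧
  ∀ x : S, ∃ f : ℕ → S, (∀ n, f n ∈ B) ∧ Monotone f ∧
    (∀ n, WayBelow (f n) (f (n + 1))) ∧ IsLUB (Set.range f) x

/-- A functional on `S`: preserves `0`, addition, order and suprema of increasing
sequences. -/
def IsFunctional (l : S → ℝ≥0∞) : Prop :=
  l 0 = 0 ∧ (∀ x y : S, l (x + y) = l x + l y) ∧ Monotone l ∧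
  (∀ f : ℕ → S, Monotone f → ∀ s : S, IsLUB (Set.range f) s → l s = ⨆ n, l (f n))

/-- `(x̂ ∧ ŷ)(λ) = inf { λ₁(x) + λ₂(y) : λ = λ₁ + λ₂ }`. -/
noncomputable def hatInf (x y : S) (l : S → ℝ≥0∞) : ℝ≥0∞ :=
  sInf {t : ℝ≥0∞ | ∃ l₁ l₂ : S → ℝ≥0∞, IsFunctional l₁ ∧ IsFunctional l₂ ∧
    (∀ u : S, l u = l₁ u + l₂ u) ∧ t = l₁ x + l₂ y}

/-- Edwards' condition for the functional `l`. -/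
def EdwardsFor (l : S → ℝ≥0∞) : Prop := ∀ x y : S,
  hatInf x y l = sSup {t : ℝ≥0∞ | ∃ z : S, z ≤ x ∧ z ≤ y ∧ t = l z}

/-- The ideal generated by a subset. -/
def idealGen (X : Set S) : Set S := ⋂₀ {J : Set S | IsIdeal J ∧ X ⊆ J}


/-! ### Auxiliary lemmas for statement 14 -/

section Stmt14Aux

variable {S : Type*} [AddCommMonoid S] [PartialOrder S]

lemma wb_of_le_wb {x y z : S} (h : x ≤ y) (h2 : WayBelow y z) : WayBelow x z := by
  intro f hf s hs hzs
  obtain ⟨n, hn⟩ := h2 f hf s hs hzs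
  exact ⟨n, h.trans hn⟩

lemma wb_of_wb_le {x y z : S} (h : WayBelow x y) (h2 : y ≤ z) : WayBelow x z := by
  intro f hf s hs hzs
  exact h f hf s hs (h2.trans hzs)

lemma wb_le {x y : S} (h : WayBelow x y) : x ≤ y := by
  have hlub : IsLUB (Set.range fun _ : ℕ => y) y := by
    rw [Set.range_const]; exact isLUB_singleton
  obtain ⟨n, hn⟩ := h (fun _ => y) monotone_const y hlub le_rfl
  exact hn

lemma wb_zero (hpos : ∀ a : S, (0:S) ≤ a) (x : S) : WayBelow (0:S) x := by
  intro f _ s _ _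
  exact ⟨0, hpos _⟩

lemma wb_interp (hO2 : AxO2 (S := S)) {x y : S} (h : WayBelow x y) :
    ∃ m, WayBelow x m ∧ WayBelow m y := by
  obtain ⟨f, hfm, hfwb, hflub⟩ := hO2 y
  obtain ⟨n, hn⟩ := h f hfm y hflub le_rfl
  exact ⟨f (n+1), wb_of_le_wb hn (hfwb n),
    wb_of_wb_le (hfwb (n+1)) (hflub.1 (Set.mem_range_self _))⟩

lemma add_le_add'' (hadd : ∀ a b c : S, b ≤ c → a + b ≤ a + c)
    {a b c d : S} (h1 : a ≤ c) (h2 : b ≤ d) : a + b ≤ c + d := by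
  calc a + b ≤ a + d := hadd _ _ _ h2
  _ = d + a := add_comm _ _
  _ ≤ d + c := hadd _ _ _ h1
  _ = c + d := add_comm _ _

/-- The restriction functional `λ₁` associated to an ideal. -/
noncomputable def lamJ (J : Set S) (l : S → ℝ≥0∞) (u : S) : ℝ≥0∞ :=
  sSup {t : ℝ≥0∞ | ∃ z : S, z ∈ J ∧ z ≤ u ∧ t = l z}

/-- The pair-complement. -/
noncomputable def lamP (J : Set S) (l : S → ℝ≥0∞) (u : S) : ℝ≥0∞ :=
  ⨆ w : {w : S // WayBelow w u}, (l ↑w - lamJ J l ↑w)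

/-- The regularized complement. -/
noncomputable def lamStar (J : Set S) (l : S → ℝ≥0∞) (u : S) : ℝ≥0∞ :=
  ⨆ w : {w : S // WayBelow w u ∧ lamJ J l w ≠ ⊤}, lamP J l ↑w

variable {J : Set S} {l : S → ℝ≥0∞}

lemma lamJ_mono (h : u ≤ v) : lamJ J l u ≤ lamJ J l v := by
  apply sSup_le
  rintro t ⟨z, hz, hzu, rfl⟩
  exact le_sSup ⟨z, hz, hzu.trans h, rfl⟩

lemma le_lamJ {z u : S} (hz : z ∈ J) (hzu : z ≤ u) : l z ≤ lamJ J l u :=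
  le_sSup ⟨z, hz, hzu, rfl⟩

lemma lamJ_le_l (hl : IsFunctional l) (u : S) : lamJ J l u ≤ l u := by
  apply sSup_le
  rintro t ⟨z, _, hzu, rfl⟩
  exact hl.2.2.1 hzu

lemma lamJ_onJ (hl : IsFunctional l) {u : S} (hu : u ∈ J) : lamJ J l u = l u :=
  le_antisymm (lamJ_le_l hl u) (le_lamJ hu le_rfl)

lemma lamJ_zero (hl : IsFunctional l) : lamJ J l 0 = 0 := by
  refine le_antisymm ?_ (zero_le)
  apply sSup_le
  rintro t ⟨z, _, hz0, rfl⟩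
  calc l z ≤ l 0 := hl.2.2.1 hz0
  _ = 0 := hl.1

lemma lamJ_add (hpos : ∀ a : S, (0:S) ≤ a) (hadd : ∀ a b c : S, b ≤ c → a + b ≤ a + c)
    (hO2 : AxO2 (S := S)) (hO6 : AxO6 (S := S)) (hJ : IsIdeal J) (hl : IsFunctional l)
    (u v : S) : lamJ J l (u + v) = lamJ J l u + lamJ J l v := by
  apply le_antisymm
  · apply sSup_le
    rintro t ⟨z, hz, hzuv, rfl⟩
    obtain ⟨f, hfm, hfwb, hflub⟩ := hO2 z
    rw [hl.2.2.2 f hfm z hflub]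
    apply iSup_le; intro n
    have hwb : WayBelow (f n) z := wb_of_wb_le (hfwb n) (hflub.1 (Set.mem_range_self _))
    obtain ⟨y', z', hle, hy'x, hy'y, hz'x, hz'z⟩ := hO6 (f n) z u v hwb hzuv
    calc l (f n) ≤ l (y' + z') := hl.2.2.1 hle
    _ = l y' + l z' := hl.2.1 _ _
    _ ≤ lamJ J l u + lamJ J l v :=
        add_le_add (le_lamJ (hJ.2.2.1 _ _ hz hy'x) hy'y) (le_lamJ (hJ.2.2.1 _ _ hz hz'x) hz'z)
  · haveI h1 : Nonempty {t : ℝ≥0∞ // t ∈ {t : ℝ≥0∞ | ∃ z : S, z ∈ J ∧ z ≤ u ∧ t = l z}} :=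
      ⟨⟨l 0, 0, hJ.1, hpos u, rfl⟩⟩
    haveI h2 : Nonempty {t : ℝ≥0∞ // t ∈ {t : ℝ≥0∞ | ∃ z : S, z ∈ J ∧ z ≤ v ∧ t = l z}} :=
      ⟨⟨l 0, 0, hJ.1, hpos v, rfl⟩⟩
    rw [lamJ, lamJ, sSup_eq_iSup', sSup_eq_iSup', ENNReal.iSup_add]
    apply iSup_le
    rintro ⟨t1, z1, hz1, hz1u, rfl⟩
    rw [ENNReal.add_iSup]
    apply iSup_le
    rintro ⟨t2, z2, hz2, hz2v, rfl⟩
    calc l z1 + l z2 = l (z1 + z2) := (hl.2.1 _ _).symm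
    _ ≤ lamJ J l (u + v) := le_lamJ (hJ.2.1 _ _ hz1 hz2) (add_le_add'' hadd hz1u hz2v)

lemma lamJ_sups (hO2 : AxO2 (S := S)) (hJ : IsIdeal J) (hl : IsFunctional l)
    (g : ℕ → S) (hg : Monotone g) (s : S) (hs : IsLUB (Set.range g) s) :
    lamJ J l s = ⨆ n, lamJ J l (g n) := by
  apply le_antisymm
  · apply sSup_le
    rintro t ⟨z, hz, hzs, rfl⟩
    obtain ⟨f, hfm, hfwb, hflub⟩ := hO2 z
    rw [hl.2.2.2 f hfm z hflub]
    apply iSup_le; intro k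
    have hwb : WayBelow (f k) s :=
      wb_of_wb_le (hfwb k) ((hflub.1 (Set.mem_range_self _)).trans hzs)
    obtain ⟨n, hn⟩ := hwb g hg s hs le_rfl
    have hfkJ : f k ∈ J := hJ.2.2.1 _ _ hz (hflub.1 (Set.mem_range_self k))
    exact le_iSup_of_le n (le_lamJ hfkJ hn)
  · exact iSup_le fun n => lamJ_mono (hs.1 (Set.mem_range_self n))

lemma lamJ_functional (hpos : ∀ a : S, (0:S) ≤ a) (hadd : ∀ a b c : S, b ≤ c → a + b ≤ a + c)
    (hO2 : AxO2 (S := S)) (hO6 : AxO6 (S := S)) (hJ : IsIdeal J) (hl : IsFunctional l) :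
    IsFunctional (lamJ J l) :=
  ⟨lamJ_zero hl, lamJ_add hpos hadd hO2 hO6 hJ hl, fun _ _ h => lamJ_mono h,
    lamJ_sups hO2 hJ hl⟩

/-- The cross inequality, via O5. -/
lemma lamJ_cross (hpos : ∀ a : S, (0:S) ≤ a) (hadd : ∀ a b c : S, b ≤ c → a + b ≤ a + c)
    (hO2 : AxO2 (S := S)) (hO5 : AxO5 (S := S)) (hO6 : AxO6 (S := S))
    (hJ : IsIdeal J) (hl : IsFunctional l) {w u : S} (hwu : w ≤ u) :
    l w + lamJ J l u ≤ l u + lamJ J l w := by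
  obtain ⟨f, hfm, hfwb, hflub⟩ := hO2 w
  rw [hl.2.2.2 f hfm w hflub, ENNReal.iSup_add]
  apply iSup_le; intro n
  have hwb : WayBelow (f n) w := wb_of_wb_le (hfwb n) (hflub.1 (Set.mem_range_self _))
  obtain ⟨c, hc1, hc2, -⟩ := hO5 (f n) w u 0 0 hwb hwu (wb_zero hpos 0)
    (by rw [add_zero]; exact hwu)
  have h1 : lamJ J l u ≤ lamJ J l w + l c := by
    calc lamJ J l u ≤ lamJ J l (w + c) := lamJ_mono hc2
    _ = lamJ J l w + lamJ J l c := lamJ_add hpos hadd hO2 hO6 hJ hl w c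
    _ ≤ lamJ J l w + l c := add_le_add_right (lamJ_le_l hl c) _
  calc l (f n) + lamJ J l u ≤ l (f n) + (lamJ J l w + l c) := add_le_add_right h1 _
  _ = lamJ J l w + (l (f n) + l c) := by ring
  _ = lamJ J l w + l (f n + c) := by rw [hl.2.1]
  _ ≤ lamJ J l w + l u := add_le_add_right (hl.2.2.1 hc1) _
  _ = l u + lamJ J l w := add_comm _ _

lemma cd_le {a b c d : ℝ≥0∞} (h : a + c ≤ b + d) (hcb : c ≤ b) : c + (a - d) ≤ b := by
  rcases le_or_gt a d with h1 | h1
  · rw [tsub_eq_zero_of_le h1, add_zero]; exact hcb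
  · have hd : d ≠ ⊤ := h1.ne_top
    have key : (c + (a - d)) + d ≤ b + d := by
      calc (c + (a - d)) + d = c + ((a - d) + d) := by rw [add_assoc]
      _ = c + a := by rw [tsub_add_cancel_of_le h1.le]
      _ = a + c := add_comm _ _
      _ ≤ b + d := h
    exact (WithTop.add_le_add_iff_right hd).mp key

lemma lamP_mono {u v : S} (h : u ≤ v) : lamP J l u ≤ lamP J l v := by
  apply iSup_le
  rintro ⟨w, hw⟩
  exact le_iSup_of_le ⟨w, wb_of_wb_le hw h⟩ le_rfl

lemma lamP_P2 (hpos : ∀ a : S, (0:S) ≤ a) (hadd : ∀ a b c : S, b ≤ c → a + b ≤ a + c)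
    (hO2 : AxO2 (S := S)) (hO5 : AxO5 (S := S)) (hO6 : AxO6 (S := S))
    (hJ : IsIdeal J) (hl : IsFunctional l) (u : S) :
    lamJ J l u + lamP J l u = l u := by
  apply le_antisymm
  · haveI : Nonempty {w : S // WayBelow w u} := ⟨⟨0, wb_zero hpos u⟩⟩
    rw [lamP, ENNReal.add_iSup]
    apply iSup_le
    rintro ⟨w, hw⟩
    exact cd_le (lamJ_cross hpos hadd hO2 hO5 hO6 hJ hl (wb_le hw)) (lamJ_le_l hl u)
  · obtain ⟨f, hfm, hfwb, hflub⟩ := hO2 u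
    rw [hl.2.2.2 f hfm u hflub]
    apply iSup_le; intro n
    have hwb : WayBelow (f n) u := wb_of_wb_le (hfwb n) (hflub.1 (Set.mem_range_self _))
    calc l (f n) ≤ (l (f n) - lamJ J l (f n)) + lamJ J l (f n) := le_tsub_add
    _ ≤ lamP J l u + lamJ J l u := by
        refine add_le_add ?_ (lamJ_mono (wb_le hwb))
        exact le_iSup (fun w : {w : S // WayBelow w u} => (l ↑w - lamJ J l ↑w)) ⟨f n, hwb⟩
    _ = lamJ J l u + lamP J l u := add_comm _ _

lemma lamP_onJ (hJ : IsIdeal J) (hl : IsFunctional l) {u : S} (hu : u ∈ J) :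
    lamP J l u = 0 := by
  refine le_antisymm ?_ (zero_le)
  apply iSup_le
  rintro ⟨w, hw⟩
  have hwJ : w ∈ J := hJ.2.2.1 _ _ hu (wb_le hw)
  rw [lamJ_onJ hl hwJ, tsub_self]

lemma lamP_zero (hl : IsFunctional l) (hpos : ∀ a : S, (0:S) ≤ a) : lamP J l 0 = 0 := by
  refine le_antisymm ?_ (zero_le)
  apply iSup_le
  rintro ⟨w, hw⟩
  have hw0 : l w = 0 := le_antisymm (by rw [← hl.1]; exact hl.2.2.1 (wb_le hw)) (zero_le)
  calc l w - lamJ J l w ≤ l w := tsub_le_self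
  _ = 0 := hw0

lemma lamP_le_of (hO2 : AxO2 (S := S)) {u : S} {T : ℝ≥0∞}
    (h : ∀ w0, WayBelow w0 u → lamP J l w0 ≤ T) : lamP J l u ≤ T := by
  apply iSup_le
  rintro ⟨w1, hw1⟩
  obtain ⟨m, hm1, hm2⟩ := wb_interp hO2 hw1
  calc l w1 - lamJ J l w1 ≤ lamP J l m :=
    le_iSup (fun w : {w : S // WayBelow w m} => (l ↑w - lamJ J l ↑w)) ⟨w1, hm1⟩
  _ ≤ T := h m hm2

lemma lamP_finadd (hpos : ∀ a : S, (0:S) ≤ a) (hadd : ∀ a b c : S, b ≤ c → a + b ≤ a + c)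
    (hO2 : AxO2 (S := S)) (hO5 : AxO5 (S := S)) (hO6 : AxO6 (S := S))
    (hJ : IsIdeal J) (hl : IsFunctional l) {u v : S}
    (hu : lamJ J l u ≠ ⊤) (hv : lamJ J l v ≠ ⊤) :
    lamP J l (u + v) = lamP J l u + lamP J l v := by
  have hJadd : lamJ J l (u + v) = lamJ J l u + lamJ J l v := lamJ_add hpos hadd hO2 hO6 hJ hl u v
  have hne : lamJ J l (u + v) ≠ ⊤ := by
    rw [hJadd]; exact ENNReal.add_ne_top.mpr ⟨hu, hv⟩
  have e1 : lamJ J l (u+v) + lamP J l (u+v) = l u + l v := by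
    rw [lamP_P2 hpos hadd hO2 hO5 hO6 hJ hl (u+v)]; exact hl.2.1 u v
  have e2 : lamJ J l (u+v) + (lamP J l u + lamP J l v) = l u + l v := by
    rw [hJadd, ← lamP_P2 hpos hadd hO2 hO5 hO6 hJ hl u,
      ← lamP_P2 hpos hadd hO2 hO5 hO6 hJ hl v]
    ring
  exact (ENNReal.add_right_inj hne).mp (e1.trans e2.symm)

lemma lamStar_mono {u v : S} (h : u ≤ v) : lamStar J l u ≤ lamStar J l v := by
  apply iSup_le
  rintro ⟨w, hw, hwfin⟩
  exact le_iSup_of_le ⟨w, wb_of_wb_le hw h, hwfin⟩ le_rfl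

lemma lamStar_zero (hpos : ∀ a : S, (0:S) ≤ a) (hl : IsFunctional l) :
    lamStar J l 0 = 0 := by
  refine le_antisymm ?_ (zero_le)
  apply iSup_le
  rintro ⟨w, hw, -⟩
  calc lamP J l w ≤ lamP J l 0 := lamP_mono (wb_le hw)
  _ = 0 := lamP_zero hl hpos

lemma lamStar_onJ (hJ : IsIdeal J) (hl : IsFunctional l) {u : S} (hu : u ∈ J) :
    lamStar J l u = 0 := by
  refine le_antisymm ?_ (zero_le)
  apply iSup_le
  rintro ⟨w, hw, -⟩
  exact le_of_eq (lamP_onJ hJ hl (hJ.2.2.1 _ _ hu (wb_le hw)))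

lemma lamStar_P2 (hpos : ∀ a : S, (0:S) ≤ a) (hadd : ∀ a b c : S, b ≤ c → a + b ≤ a + c)
    (hO2 : AxO2 (S := S)) (hO5 : AxO5 (S := S)) (hO6 : AxO6 (S := S))
    (hJ : IsIdeal J) (hl : IsFunctional l) (u : S) :
    lamJ J l u + lamStar J l u = l u := by
  by_cases hfin : lamJ J l u = ⊤
  · rw [hfin, top_add]
    exact (top_le_iff.mp (hfin ▸ lamJ_le_l hl u)).symm
  · have hstar : lamStar J l u = lamP J l u := by
      apply le_antisymm
      · apply iSup_le
        rintro ⟨w, hw, -⟩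
        exact lamP_mono (wb_le hw)
      · apply lamP_le_of hO2
        intro w0 hw0
        have : lamJ J l w0 ≠ ⊤ := fun h =>
          hfin (top_le_iff.mp (h ▸ lamJ_mono (wb_le hw0)))
        exact le_iSup_of_le ⟨w0, hw0, this⟩ le_rfl
    rw [hstar]
    exact lamP_P2 hpos hadd hO2 hO5 hO6 hJ hl u

lemma lamStar_add (hpos : ∀ a : S, (0:S) ≤ a) (hadd : ∀ a b c : S, b ≤ c → a + b ≤ a + c)
    (hO2 : AxO2 (S := S)) (hO3 : AxO3 (S := S)) (hO4 : AxO4 (S := S))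
    (hO5 : AxO5 (S := S)) (hO6 : AxO6 (S := S))
    (hJ : IsIdeal J) (hl : IsFunctional l) (u v : S) :
    lamStar J l (u + v) = lamStar J l u + lamStar J l v := by
  apply le_antisymm
  · -- subadditivity
    apply iSup_le
    rintro ⟨w, hw, hwfin⟩
    apply lamP_le_of hO2
    intro w0 hw0
    obtain ⟨f, hfm, hfwb, hflub⟩ := hO2 u
    obtain ⟨g, hgm, hgwb, hglub⟩ := hO2 v
    have hmono : Monotone (fun n => f n + g n) := fun a b hab =>
      add_le_add'' hadd (hfm hab) (hgm hab)
    obtain ⟨n, hn⟩ := hw _ hmono _ (hO4 f g hfm hgm u v hflub hglub) le_rfl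
    obtain ⟨a, b, hab, haw, hafu, hbw, hbgv⟩ := hO6 w0 w (f n) (g n) hw0 hn
    have hau : WayBelow a u :=
      wb_of_le_wb hafu (wb_of_wb_le (hfwb n) (hflub.1 (Set.mem_range_self _)))
    have hbv : WayBelow b v :=
      wb_of_le_wb hbgv (wb_of_wb_le (hgwb n) (hglub.1 (Set.mem_range_self _)))
    have hafin : lamJ J l a ≠ ⊤ := fun h => hwfin (top_le_iff.mp (h ▸ lamJ_mono haw))
    have hbfin : lamJ J l b ≠ ⊤ := fun h => hwfin (top_le_iff.mp (h ▸ lamJ_mono hbw))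
    calc lamP J l w0 ≤ lamP J l (a + b) := lamP_mono hab
    _ = lamP J l a + lamP J l b := lamP_finadd hpos hadd hO2 hO5 hO6 hJ hl hafin hbfin
    _ ≤ lamStar J l u + lamStar J l v :=
        add_le_add (le_iSup_of_le ⟨a, hau, hafin⟩ le_rfl) (le_iSup_of_le ⟨b, hbv, hbfin⟩ le_rfl)
  · -- superadditivity
    haveI n1 : Nonempty {w : S // WayBelow w u ∧ lamJ J l w ≠ ⊤} :=
      ⟨⟨0, wb_zero hpos u, by rw [lamJ_zero hl]; exact ENNReal.zero_ne_top⟩⟩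
    haveI n2 : Nonempty {w : S // WayBelow w v ∧ lamJ J l w ≠ ⊤} :=
      ⟨⟨0, wb_zero hpos v, by rw [lamJ_zero hl]; exact ENNReal.zero_ne_top⟩⟩
    rw [lamStar, lamStar, ENNReal.iSup_add]
    apply iSup_le
    rintro ⟨w1, hw1, hfin1⟩
    rw [ENNReal.add_iSup]
    apply iSup_le
    rintro ⟨w2, hw2, hfin2⟩
    calc lamP J l w1 + lamP J l w2 = lamP J l (w1 + w2) :=
      (lamP_finadd hpos hadd hO2 hO5 hO6 hJ hl hfin1 hfin2).symm
    _ ≤ lamStar J l (u + v) := by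
        refine le_iSup_of_le ⟨w1 + w2, hO3 _ _ _ _ hw1 hw2, ?_⟩ le_rfl
        rw [lamJ_add hpos hadd hO2 hO6 hJ hl]
        exact ENNReal.add_ne_top.mpr ⟨hfin1, hfin2⟩

lemma lamStar_sups (hO2 : AxO2 (S := S))
    (g : ℕ → S) (hg : Monotone g) (s : S) (hs : IsLUB (Set.range g) s) :
    lamStar J l s = ⨆ n, lamStar J l (g n) := by
  apply le_antisymm
  · apply iSup_le
    rintro ⟨w, hw, hwfin⟩
    obtain ⟨m, hm1, hm2⟩ := wb_interp hO2 hw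
    obtain ⟨n, hn⟩ := hm2 g hg s hs le_rfl
    exact le_iSup_of_le n (le_iSup_of_le ⟨w, wb_of_wb_le hm1 hn, hwfin⟩ le_rfl)
  · exact iSup_le fun n => lamStar_mono (hs.1 (Set.mem_range_self n))

lemma lamStar_functional (hpos : ∀ a : S, (0:S) ≤ a) (hadd : ∀ a b c : S, b ≤ c → a + b ≤ a + c)
    (hO2 : AxO2 (S := S)) (hO3 : AxO3 (S := S)) (hO4 : AxO4 (S := S))
    (hO5 : AxO5 (S := S)) (hO6 : AxO6 (S := S))
    (hJ : IsIdeal J) (hl : IsFunctional l) :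
    IsFunctional (lamStar J l) :=
  ⟨lamStar_zero hpos hl, lamStar_add hpos hadd hO2 hO3 hO4 hO5 hO6 hJ hl,
    fun _ _ h => lamStar_mono h, lamStar_sups hO2⟩

end Stmt14Aux

open Classical in
/-- `(x̂ ∧ h_J)(λ) = sup { λ(z) : z ∈ J, z ≤ x }`, where
`h_J(μ) = 0` if `μ ≤ λ_J` (i.e. `μ` vanishes on `J`) and `∞` otherwise. -/
theorem stmt14 {S : Type*} [AddCommMonoid S] [PartialOrder S]
    (hCu : CuSemigroup (S := S)) (hO5 : AxO5 (S := S)) (hO6 : AxO6 (S := S))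
    (J : Set S) (hJ : IsIdeal J) (x : S)
    (l : S → ℝ≥0∞) (hl : IsFunctional l) :
    sInf {t : ℝ≥0∞ | ∃ l₁ l₂ : S → ℝ≥0∞, IsFunctional l₁ ∧ IsFunctional l₂ ∧
        (∀ u : S, l u = l₁ u + l₂ u) ∧
        t = l₁ x + (if ∀ u ∈ J, l₂ u = 0 then 0 else (∞ : ℝ≥0∞))}
      = sSup {t : ℝ≥0∞ | ∃ z : S, z ∈ J ∧ z ≤ x ∧ t = l z} := by
  obtain ⟨⟨hpos, hadd⟩, hO1, hO2, hO3, hO4⟩ := hCu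
  apply le_antisymm
  · -- sInf ≤ sSup : exhibit the decomposition l = lamJ + lamStar
    have hmem : lamJ J l x + (if ∀ u ∈ J, lamStar J l u = 0 then 0 else (∞ : ℝ≥0∞)) ∈
        {t : ℝ≥0∞ | ∃ l₁ l₂ : S → ℝ≥0∞, IsFunctional l₁ ∧ IsFunctional l₂ ∧
          (∀ u : S, l u = l₁ u + l₂ u) ∧
          t = l₁ x + (if ∀ u ∈ J, l₂ u = 0 then 0 else (∞ : ℝ≥0∞))} :=
      ⟨lamJ J l, lamStar J l, lamJ_functional hpos hadd hO2 hO6 hJ hl,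
        lamStar_functional hpos hadd hO2 hO3 hO4 hO5 hO6 hJ hl,
        fun u => (lamStar_P2 hpos hadd hO2 hO5 hO6 hJ hl u).symm, rfl⟩
    refine le_trans (sInf_le hmem) ?_
    rw [if_pos (fun u hu => lamStar_onJ hJ hl hu), add_zero]
    exact le_of_eq rfl
  · apply le_sInf
    rintro t ⟨l₁, l₂, h1, h2, hdec, rfl⟩
    by_cases hz : ∀ u ∈ J, l₂ u = 0
    · rw [if_pos hz, add_zero]
      apply sSup_le
      rintro t ⟨z, hzJ, hzx, rfl⟩
      calc l z = l₁ z + l₂ z := hdec z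
      _ = l₁ z + 0 := by rw [hz z hzJ]
      _ = l₁ z := add_zero _
      _ ≤ l₁ x := h1.2.2.1 hzx
    · rw [if_neg hz, add_top]
      exact le_top

end CuFormal
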